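/- For n balls thrown as above (each kept with probability p and placed in a uniform bin among u bins), Σ_{k=2}^n C(n,k)(p/u)^k(1-p)^{n-k} ≤ (1/2)·(np/(u(1-p)))²·exp(-np(1 - 1/(u(1-p)))). -/

import Mathlib

open scoped Nat

/-- Core inequality of the false-positive lemma: for `0 < p < 1`, `u ≥ 1`,
`∑_{k=2}^n C(n,k)(p/u)^k(1-p)^{n-k} ≤ (1/2)(np/(u(1-p)))²·exp(-np(1 - 1/(u(1-p))))`. -/
theorem stmt_14 (n : ℕ) (p u : ℝ) (hp0 : 0 < p) (hp1 : p < 1) (hu : 1 ≤ u) :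
    ∑ k ∈ Finset.Icc 2 n, (n.choose k : ℝ) * (p / u) ^ k * (1 - p) ^ (n - k) ≤
      1 / 2 * ((n : ℝ) * p / (u * (1 - p))) ^ 2 *
        Real.exp (-((n : ℝ) * p * (1 - 1 / (u * (1 - p))))) := by
  have h1p : (0:ℝ) < 1 - p := by linarith
  have hu0 : (0:ℝ) < u := by linarith
  have hden : (0:ℝ) < u * (1 - p) := mul_pos hu0 h1p
  set y : ℝ := (n : ℝ) * p / (u * (1 - p)) with hy
  have hy0 : 0 ≤ y := by positivity
  -- Step A: termwise bound
  have hA : ∑ k ∈ Finset.Icc 2 n, (n.choose k : ℝ) * (p / u) ^ k * (1 - p) ^ (n - k) ≤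
      (1 - p) ^ n * ∑ k ∈ Finset.Icc 2 n, y ^ k / (k ! : ℝ) := by
    rw [Finset.mul_sum]
    refine Finset.sum_le_sum fun k hk => ?_
    obtain ⟨hk2, hkn⟩ := Finset.mem_Icc.mp hk
    have hsplit : (1 - p) ^ (n - k) * (1 - p) ^ k = (1 - p) ^ n := by
      rw [← pow_add, Nat.sub_add_cancel hkn]
    have hchoose : (n.choose k : ℝ) ≤ (n : ℝ) ^ k / (k ! : ℝ) := by
      have := Nat.choose_le_pow_div (α := ℝ) k n
      simpa using this
    have key : (n.choose k : ℝ) * (p / u) ^ k * (1 - p) ^ (n - k)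
        = (n.choose k : ℝ) * (p / (u * (1 - p))) ^ k * (1 - p) ^ n := by
      rw [← hsplit]
      rw [div_pow, div_pow, mul_pow]
      field_simp
    rw [key]
    have hyk : y ^ k = (n : ℝ) ^ k * (p / (u * (1 - p))) ^ k := by
      rw [← mul_pow, hy]; ring_nf
    have h1 : (n.choose k : ℝ) * (p / (u * (1 - p))) ^ k ≤ y ^ k / (k ! : ℝ) := by
      rw [hyk]
      have hpos : (0:ℝ) ≤ (p / (u * (1 - p))) ^ k := by positivity
      calc (n.choose k : ℝ) * (p / (u * (1 - p))) ^ k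
          ≤ ((n : ℝ) ^ k / (k ! : ℝ)) * (p / (u * (1 - p))) ^ k :=
            mul_le_mul_of_nonneg_right hchoose hpos
        _ = (n : ℝ) ^ k * (p / (u * (1 - p))) ^ k / (k ! : ℝ) := by ring
    calc (n.choose k : ℝ) * (p / (u * (1 - p))) ^ k * (1 - p) ^ n
        ≤ (y ^ k / (k ! : ℝ)) * (1 - p) ^ n :=
          mul_le_mul_of_nonneg_right h1 (by positivity)
      _ = (1 - p) ^ n * (y ^ k / (k ! : ℝ)) := by ring
  -- Step B: tail sum bound
  have hB : ∑ k ∈ Finset.Icc 2 n, y ^ k / (k ! : ℝ) ≤ y ^ 2 / 2 * Real.exp y := by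
    have h1 : ∑ k ∈ Finset.Icc 2 n, y ^ k / (k ! : ℝ) ≤
        ∑ k ∈ Finset.Icc 2 n, y ^ 2 / 2 * (y ^ (k - 2) / ((k - 2)! : ℝ)) := by
      refine Finset.sum_le_sum fun k hk => ?_
      obtain ⟨hk2, hkn⟩ := Finset.mem_Icc.mp hk
      have hfac : 2 * (k - 2)! ≤ k ! := by
        obtain ⟨m, rfl⟩ : ∃ m, k = m + 2 := ⟨k - 2, by omega⟩
        simp only [Nat.add_sub_cancel]
        calc 2 * m ! ≤ ((m + 2) * (m + 1)) * m ! :=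
              Nat.mul_le_mul_right _ (by nlinarith)
          _ = (m + 2) * ((m + 1) * m !) := by ring
          _ = (m + 2)! := by rw [Nat.factorial_succ, Nat.factorial_succ]
      have hyk : y ^ k = y ^ 2 * y ^ (k - 2) := by
        rw [← pow_add]; congr 1; omega
      rw [hyk]
      have hfacR : (2 : ℝ) * ((k - 2)! : ℝ) ≤ (k ! : ℝ) := by exact_mod_cast hfac
      have hf0 : (0:ℝ) < ((k - 2)! : ℝ) := by positivity
      have hk0 : (0:ℝ) < (k ! : ℝ) := by positivity
      rw [div_le_iff₀ hk0]
      have h2 : y ^ 2 / 2 * (y ^ (k - 2) / ((k - 2)! : ℝ)) * (2 * ((k - 2)! : ℝ))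
          = y ^ 2 * y ^ (k - 2) := by field_simp
      calc y ^ 2 * y ^ (k - 2) = y ^ 2 / 2 * (y ^ (k - 2) / ((k - 2)! : ℝ)) * (2 * ((k - 2)! : ℝ)) := h2.symm
        _ ≤ y ^ 2 / 2 * (y ^ (k - 2) / ((k - 2)! : ℝ)) * ((k ! : ℝ)) := by
            apply mul_le_mul_of_nonneg_left hfacR (by positivity)
    have h2 : ∑ k ∈ Finset.Icc 2 n, y ^ 2 / 2 * (y ^ (k - 2) / ((k - 2)! : ℝ))
        = y ^ 2 / 2 * ∑ j ∈ Finset.range (n + 1 - 2), y ^ j / (j ! : ℝ) := by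
      rw [Finset.mul_sum, ← Finset.Ico_add_one_right_eq_Icc, Finset.sum_Ico_eq_sum_range]
      exact Finset.sum_congr rfl fun j _ => by simp [Nat.add_sub_cancel_left, add_comm]
    have h3 : ∑ j ∈ Finset.range (n + 1 - 2), y ^ j / (j ! : ℝ) ≤ Real.exp y :=
      Real.sum_le_exp_of_nonneg hy0 _
    calc ∑ k ∈ Finset.Icc 2 n, y ^ k / (k ! : ℝ)
        ≤ ∑ k ∈ Finset.Icc 2 n, y ^ 2 / 2 * (y ^ (k - 2) / ((k - 2)! : ℝ)) := h1
      _ = y ^ 2 / 2 * ∑ j ∈ Finset.range (n + 1 - 2), y ^ j / (j ! : ℝ) := h2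
      _ ≤ y ^ 2 / 2 * Real.exp y := by
          apply mul_le_mul_of_nonneg_left h3 (by positivity)
  -- Step C: combine
  have hC : (1 - p) ^ n ≤ Real.exp (-(n * p)) := by
    have h1 : 1 - p ≤ Real.exp (-p) := by
      have := Real.add_one_le_exp (-p)
      linarith
    calc (1 - p) ^ n ≤ (Real.exp (-p)) ^ n := pow_le_pow_left₀ (le_of_lt h1p) h1 n
      _ = Real.exp (-(n * p)) := by
          rw [← Real.exp_nat_mul]; ring_nf
  have hexp : Real.exp (-((n:ℝ) * p)) * Real.exp y
      = Real.exp (-((n : ℝ) * p * (1 - 1 / (u * (1 - p))))) := by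
    rw [← Real.exp_add]
    congr 1
    rw [hy]
    field_simp
    ring
  calc ∑ k ∈ Finset.Icc 2 n, (n.choose k : ℝ) * (p / u) ^ k * (1 - p) ^ (n - k)
      ≤ (1 - p) ^ n * ∑ k ∈ Finset.Icc 2 n, y ^ k / (k ! : ℝ) := hA
    _ ≤ (1 - p) ^ n * (y ^ 2 / 2 * Real.exp y) := by
        apply mul_le_mul_of_nonneg_left hB (by positivity)
    _ ≤ Real.exp (-((n:ℝ) * p)) * (y ^ 2 / 2 * Real.exp y) := by
        apply mul_le_mul_of_nonneg_right hC (by positivity)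
    _ = 1 / 2 * y ^ 2 * (Real.exp (-((n:ℝ) * p)) * Real.exp y) := by ring
    _ = 1 / 2 * ((n : ℝ) * p / (u * (1 - p))) ^ 2 *
        Real.exp (-((n : ℝ) * p * (1 - 1 / (u * (1 - p))))) := by rw [hexp, hy]
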